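/- arXiv:1301.2171 — 4 statements merged into one kernel-verified Lean document; each statement's English description precedes it below -/
import Mathlib

section
/- Let Ω be a countably infinite set. The set V = {f ∈ Ω^Ω : c(f) = ∞ or 0 < d(f) < ∞} ∪ Sym(Ω) is closed under composition, i.e. V is a subsemigroup of Ω^Ω. -/
/-!
Setting: `Ω` is a countably infinite set, `Function.End Ω = Ω → Ω` is the full
transformation semigroup (a subset is closed under composition in one order iff
it is closed in the other, so the lattice of subsemigroups is unaffected by the
left-to-right convention of the paper).
-/

open Cardinal

/-- A transversal of `f`: a set on which `f` is injective and whose image is all of `Ωf`. -/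
def IsTransversal {Ω : Type*} (f : Ω → Ω) (T : Set Ω) : Prop :=
  Set.InjOn f T ∧ f '' T = Set.range f

/-- The defect `d(f) = |Ω \ Ωf|`. -/
noncomputable def defect {Ω : Type*} (f : Ω → Ω) : Cardinal :=
  #((Set.range f)ᶜ : Set Ω)

/-- The collapse `c(f) = |Ω \ Σ|` for a transversal `Σ` of `f` (the value is
independent of the choice of transversal, so the infimum is the common value). -/
noncomputable def collapse {Ω : Type*} (f : Ω → Ω) : Cardinal :=
  ⨅ T : {T : Set Ω // IsTransversal f T}, #(T.1ᶜ : Set Ω)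

/-- The infinite contraction index `k(f) = |{α : αf⁻¹ infinite}|`. -/
noncomputable def contract {Ω : Type*} (f : Ω → Ω) : Cardinal :=
  #({α : Ω | (f ⁻¹' {α}).Infinite} : Set Ω)

def S1 {Ω : Type*} : Set (Function.End Ω) := {f | collapse f = 0 ∨ 0 < defect f}
def S2 {Ω : Type*} : Set (Function.End Ω) := {f | 0 < collapse f ∨ defect f = 0}
def S3 {Ω : Type*} : Set (Function.End Ω) := {f | collapse f < ℵ₀ ∨ ℵ₀ ≤ defect f}
def S4 {Ω : Type*} : Set (Function.End Ω) := {f | ℵ₀ ≤ collapse f ∨ defect f < ℵ₀}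
def S5 {Ω : Type*} : Set (Function.End Ω) := {f | contract f < ℵ₀}

/-- `Sym(Ω)`, the bijections of `Ω`. -/
def SymOmega {Ω : Type*} : Set (Function.End Ω) := {f | Function.Bijective f}

/-- `U = {f : d(f) = ∞ or 0 < c(f) < ∞} ∪ Sym(Ω)`. -/
def SetU {Ω : Type*} : Set (Function.End Ω) :=
  {f | ℵ₀ ≤ defect f ∨ (0 < collapse f ∧ collapse f < ℵ₀)} ∪ SymOmega

/-- `V = {f : c(f) = ∞ or 0 < d(f) < ∞} ∪ Sym(Ω)`. -/
def SetV {Ω : Type*} : Set (Function.End Ω) :=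
  {f | ℵ₀ ≤ collapse f ∨ (0 < defect f ∧ defect f < ℵ₀)} ∪ SymOmega

/-- `S_{1,2,3,4,5}`. -/
def S12345 {Ω : Type*} : Set (Function.End Ω) := S1 ∩ S2 ∩ S3 ∩ S4 ∩ S5

/-- The family `S_1, …, S_5` indexed by `Fin 5`. -/
def SS {Ω : Type*} : Fin 5 → Set (Function.End Ω) := ![S1, S2, S3, S4, S5]

section Aux

open Function Set

variable {Ω : Type*}

/-- Points lying in a non-trivial fiber of `f`. -/
def Dset (f : Ω → Ω) : Set Ω := {x | ∃ y, f y = f x ∧ y ≠ x}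

open scoped Classical in
/-- A choice of a "partner" in the same fiber for points of `Dset f`. -/
noncomputable def pt (f : Ω → Ω) (x : Ω) : Ω :=
  if h : ∃ y, f y = f x ∧ y ≠ x then h.choose else x

lemma pt_spec {f : Ω → Ω} {x : Ω} (hx : x ∈ Dset f) :
    f (pt f x) = f x ∧ pt f x ≠ x := by
  have hx' : ∃ y, f y = f x ∧ y ≠ x := hx
  rw [pt, dif_pos hx']
  exact hx'.choose_spec

lemma canonT [Nonempty Ω] (f : Ω → Ω) :
    IsTransversal f {x | Function.invFun f (f x) = x} := by
  constructor
  · intro x hx y hy hxy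
    simp only [mem_setOf_eq] at hx hy
    rw [← hx, ← hy, hxy]
  · apply subset_antisymm (image_subset_range _ _)
    rintro α ⟨x, rfl⟩
    have h1 : f (Function.invFun f (f x)) = f x := Function.invFun_eq ⟨x, rfl⟩
    exact ⟨Function.invFun f (f x), by simp only [mem_setOf_eq, h1], h1⟩

lemma compl_canonT_subset [Nonempty Ω] (f : Ω → Ω) :
    {x | Function.invFun f (f x) = x}ᶜ ⊆ Dset f := by
  intro x hx
  exact ⟨Function.invFun f (f x), Function.invFun_eq ⟨x, rfl⟩, hx⟩

lemma collapse_le_mk_Dset [Nonempty Ω] (f : Ω → Ω) : collapse f ≤ #(Dset f) :=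
  le_trans (ciInf_le (OrderBot.bddBelow _) ⟨_, canonT f⟩)
    (Cardinal.mk_le_mk_of_subset (compl_canonT_subset f))

lemma Dset_finite_of_transversal {f : Ω → Ω} {T : Set Ω} (hT : IsTransversal f T)
    (hc : (Tᶜ).Finite) : (Dset f).Finite := by
  have h1 : (Dset f ∩ T).Finite := by
    apply Set.Finite.of_finite_image (f := pt f)
    · apply hc.subset
      rintro _ ⟨x, hx, rfl⟩
      intro hmem
      exact (pt_spec hx.1).2 (hT.1 hmem hx.2 (pt_spec hx.1).1)
    · intro x₁ h₁ x₂ h₂ hp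
      apply hT.1 h₁.2 h₂.2
      rw [← (pt_spec h₁.1).1, hp, (pt_spec h₂.1).1]
  apply ((h1.union hc).subset)
  intro x hx
  by_cases hxT : x ∈ T
  · exact Or.inl ⟨hx, hxT⟩
  · exact Or.inr hxT

lemma aleph0_le_collapse_iff [Nonempty Ω] (f : Ω → Ω) :
    ℵ₀ ≤ collapse f ↔ (Dset f).Infinite := by
  constructor
  · intro h
    by_contra hfin
    rw [Set.not_infinite] at hfin
    have h2 : collapse f < ℵ₀ :=
      lt_of_le_of_lt (collapse_le_mk_Dset f)
        (Cardinal.lt_aleph0_iff_set_finite.mpr hfin)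
    exact absurd h (not_le.mpr h2)
  · intro hD
    haveI : Nonempty {T : Set Ω // IsTransversal f T} := ⟨⟨_, canonT f⟩⟩
    apply le_ciInf
    intro T
    rw [Cardinal.aleph0_le_mk_iff, Set.infinite_coe_iff]
    intro hfin
    exact hD (Dset_finite_of_transversal T.2 hfin)

lemma defect_le_defect_comp (f g : Ω → Ω) : defect f ≤ defect (f ∘ g) := by
  apply Cardinal.mk_le_mk_of_subset
  apply compl_subset_compl.mpr
  rintro _ ⟨x, rfl⟩
  exact ⟨g x, rfl⟩

lemma defect_comp_le (f g : Ω → Ω) : defect (f ∘ g) ≤ defect f + defect g := by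
  have hsub : (Set.range (f ∘ g))ᶜ ⊆ (Set.range f)ᶜ ∪ f '' ((Set.range g)ᶜ) := by
    intro x hx
    by_cases hxf : x ∈ Set.range f
    · obtain ⟨y, rfl⟩ := hxf
      refine Or.inr ⟨y, fun hy => ?_, rfl⟩
      obtain ⟨z, rfl⟩ := hy
      exact hx ⟨z, rfl⟩
    · exact Or.inl hxf
  calc defect (f ∘ g) ≤ #((Set.range f)ᶜ ∪ f '' ((Set.range g)ᶜ) : Set Ω) :=
        Cardinal.mk_le_mk_of_subset hsub
    _ ≤ #((Set.range f)ᶜ : Set Ω) + #(f '' ((Set.range g)ᶜ) : Set Ω) := Cardinal.mk_union_le _ _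
    _ ≤ defect f + defect g := add_le_add le_rfl (Cardinal.mk_image_le)

lemma defect_comp_of_bij_left {f : Ω → Ω} (hf : Function.Bijective f) (g : Ω → Ω) :
    defect (f ∘ g) = defect g := by
  unfold defect
  rw [Set.range_comp, ← Set.image_compl_eq hf, Cardinal.mk_image_eq hf.injective]

lemma Dset_subset_comp (f g : Ω → Ω) : Dset g ⊆ Dset (f ∘ g) := by
  rintro x ⟨y, hy, hyx⟩
  exact ⟨y, by simp only [Function.comp_apply, hy], hyx⟩

lemma Dset_comp_infinite [Nonempty Ω] {f g : Ω → Ω} (hDf : (Dset f).Infinite)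
    (hg : ((Set.range g)ᶜ : Set Ω).Finite) : (Dset (f ∘ g)).Infinite := by
  set E : Set Ω :=
    {α | α ∈ Dset f ∧ α ∈ Set.range g ∧ ∀ β, f β = f α → β ≠ α → β ∉ Set.range g} with hEdef
  have hEfin : E.Finite := by
    apply Set.Finite.of_finite_image (f := pt f)
    · apply hg.subset
      rintro _ ⟨α, hα, rfl⟩
      exact hα.2.2 _ (pt_spec hα.1).1 (pt_spec hα.1).2
    · intro α₁ h₁ α₂ h₂ hp
      by_contra hne
      have hf12 : f α₂ = f α₁ := by rw [← (pt_spec h₂.1).1, ← hp, (pt_spec h₁.1).1]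
      exact h₁.2.2 α₂ hf12 (Ne.symm hne) h₂.2.1
  have hA : ((Dset f ∩ Set.range g) \ E).Infinite := by
    apply (hDf.diff (hEfin.union hg)).mono
    intro x hx
    rw [Set.mem_diff, Set.mem_union, not_or, Set.notMem_compl_iff] at hx
    exact ⟨⟨hx.1, hx.2.2⟩, hx.2.1⟩
  have himg : (Function.invFun g '' ((Dset f ∩ Set.range g) \ E)).Infinite := by
    apply hA.image
    intro α₁ h₁ α₂ h₂ hp
    have e1 : g (Function.invFun g α₁) = α₁ := Function.invFun_eq h₁.1.2
    have e2 : g (Function.invFun g α₂) = α₂ := Function.invFun_eq h₂.1.2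
    rw [← e1, ← e2, hp]
  apply himg.mono
  rintro _ ⟨α, hα, rfl⟩
  have hnE : ∃ β, f β = f α ∧ β ≠ α ∧ β ∈ Set.range g := by
    by_contra hcon
    push_neg at hcon
    exact hα.2 ⟨hα.1.1, hα.1.2, fun β h1 h2 => hcon β h1 h2⟩
  obtain ⟨β, hfβ, hβα, y, hy⟩ := hnE
  have einv : g (Function.invFun g α) = α := Function.invFun_eq hα.1.2
  refine ⟨y, ?_, ?_⟩
  · simp only [Function.comp_apply]
    rw [hy, einv, hfβ]
  · intro hcon
    apply hβα
    rw [← hy, hcon, einv]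

lemma mem_SetV_iff [Nonempty Ω] (f : Function.End Ω) :
    f ∈ (SetV : Set (Function.End Ω)) ↔
      (Dset f).Infinite ∨ (0 < defect f ∧ defect f < ℵ₀) ∨ Function.Bijective f := by
  rw [SetV, SymOmega, Set.mem_union, Set.mem_setOf_eq]
  exact or_assoc.trans (or_congr_left (aleph0_le_collapse_iff f))

end Aux

/-- `V = {f : c(f) = ∞ or 0 < d(f) < ∞} ∪ Sym(Ω)` is closed under composition. -/
theorem stmt2 (Ω : Type) [Countable Ω] [Infinite Ω] :
    ∀ f ∈ (SetV : Set (Function.End Ω)), ∀ g ∈ (SetV : Set (Function.End Ω)),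
      f * g ∈ (SetV : Set (Function.End Ω)) := by
  intro f hf g hg
  have hmul : f * g = (f ∘ g : Ω → Ω) := rfl
  rw [mem_SetV_iff] at hf hg
  rw [mem_SetV_iff, hmul]
  rcases hg with hDg | hg'
  · exact Or.inl (hDg.mono (Dset_subset_comp f g))
  · have hgfin : ((Set.range g)ᶜ : Set Ω).Finite := by
      rcases hg' with ⟨_, h2⟩ | hbij
      · exact Cardinal.lt_aleph0_iff_set_finite.mp h2
      · rw [hbij.surjective.range_eq, Set.compl_univ]
        exact Set.finite_empty
    rcases hf with hDf | hf'
    · exact Or.inl (Dset_comp_infinite hDf hgfin)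
    rcases hf' with ⟨h1, h2⟩ | hfbij
    · refine Or.inr (Or.inl ⟨lt_of_lt_of_le h1 (defect_le_defect_comp f g), ?_⟩)
      have hdg : defect g < ℵ₀ := Cardinal.lt_aleph0_iff_set_finite.mpr hgfin
      exact lt_of_le_of_lt (defect_comp_le f g) (Cardinal.add_lt_aleph0 h2 hdg)
    · rcases hg' with ⟨hg1, hg2⟩ | hgbij
      · refine Or.inr (Or.inl ?_)
        exact ⟨lt_of_lt_of_eq hg1 (defect_comp_of_bij_left hfbij g).symm,
          lt_of_eq_of_lt (defect_comp_of_bij_left hfbij g) hg2⟩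
      · exact Or.inr (Or.inr (hfbij.comp hgbij))
end

section
/- Let Ω be a countably infinite set and let u, f ∈ Ω^Ω. If 0 < c(u) < ∞, 0 < c(f) < ∞, and d(u) = d(f), then f belongs to the subsemigroup of Ω^Ω generated by S_{1,2,3,4,5} ∪ {u}. -/
/-!
Setting: `Ω` is a countably infinite set, `Function.End Ω = Ω → Ω` is the full
transformation semigroup (a subset is closed under composition in one order iff
it is closed in the other, so the lattice of subsemigroups is unaffected by the
left-to-right convention of the paper).
-/

open Cardinal

/-! ### Auxiliary lemmas -/

lemma exists_transversal {Ω : Type*} (g : Ω → Ω) : ∃ T, IsTransversal g T := by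
  choose s hs using fun β : Set.range g => β.2
  refine ⟨Set.range s, ?_, ?_⟩
  · rintro x ⟨a, rfl⟩ y ⟨c, rfl⟩ hxy
    rw [hs, hs] at hxy
    rw [Subtype.ext hxy]
  · ext β; constructor
    · rintro ⟨x, ⟨a, rfl⟩, rfl⟩; rw [hs]; exact a.2
    · rintro hβ; exact ⟨s ⟨β, hβ⟩, ⟨_, rfl⟩, hs _⟩

lemma exists_transversal_collapse {Ω : Type*} (g : Ω → Ω) :
    ∃ T, IsTransversal g T ∧ #(Tᶜ : Set Ω) = collapse g := by
  obtain ⟨T0, hT0⟩ := exists_transversal g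
  haveI : Nonempty {T : Set Ω // IsTransversal g T} := ⟨⟨T0, hT0⟩⟩
  have h : collapse g ∈ Set.range
      (fun T : {T : Set Ω // IsTransversal g T} => #(T.1ᶜ : Set Ω)) := by
    rw [collapse, ← sInf_range]
    exact csInf_mem (Set.range_nonempty _)
  obtain ⟨T, hT⟩ := h
  exact ⟨T.1, T.2, hT⟩

lemma collapse_le {Ω : Type*} {g : Ω → Ω} {T : Set Ω} (hT : IsTransversal g T) :
    collapse g ≤ #(Tᶜ : Set Ω) := ciInf_le' _ (⟨T, hT⟩ : {T : Set Ω // IsTransversal g T})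

lemma collapse_eq_zero_of_injective {Ω : Type*} {g : Ω → Ω} (h : Function.Injective g) :
    collapse g = 0 := by
  have hT : IsTransversal g Set.univ := ⟨h.injOn, Set.image_univ⟩
  have := collapse_le hT
  simp only [Set.compl_univ, Cardinal.mk_emptyCollection, nonpos_iff_eq_zero] at this
  exact this

lemma collapse_pos_of_not_injective {Ω : Type*} {g : Ω → Ω} (h : ¬ Function.Injective g) :
    0 < collapse g := by
  obtain ⟨T, hT, hmk⟩ := exists_transversal_collapse g
  rw [pos_iff_ne_zero]
  intro h0
  rw [← hmk, Cardinal.mk_eq_zero_iff, Set.isEmpty_coe_sort, Set.compl_empty_iff] at h0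
  subst h0
  exact h fun x y hxy => hT.1 (Set.mem_univ x) (Set.mem_univ y) hxy

lemma fibers_finite {Ω : Type*} {g : Ω → Ω} (h : collapse g < ℵ₀) (β : Ω) :
    (g ⁻¹' {β}).Finite := by
  obtain ⟨T, hT, hmk⟩ := exists_transversal_collapse g
  have hTc : (Tᶜ : Set Ω).Finite := Cardinal.lt_aleph0_iff_set_finite.mp (hmk ▸ h)
  have hsub : (g ⁻¹' {β} ∩ T).Subsingleton := fun x hx y hy =>
    hT.1 hx.2 hy.2 ((Set.mem_singleton_iff.mp hx.1).trans (Set.mem_singleton_iff.mp hy.1).symm)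
  have hincl : g ⁻¹' {β} ⊆ (g ⁻¹' {β} ∩ T) ∪ Tᶜ := by
    intro x hx; by_cases hxT : x ∈ T
    exacts [Or.inl ⟨hx, hxT⟩, Or.inr hxT]
  exact ((hsub.finite).union hTc).subset hincl

lemma sym_mem_S12345 {Ω : Type*} {g : Function.End Ω} (hg : Function.Bijective g) :
    g ∈ (S12345 : Set (Function.End Ω)) := by
  have hc : collapse g = 0 := collapse_eq_zero_of_injective hg.1
  have hdg : defect g = 0 := by
    have : (Set.range g)ᶜ = (∅ : Set Ω) := by
      rw [Set.compl_empty_iff]; exact hg.2.range_eq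
    show #((Set.range g)ᶜ : Set Ω) = 0
    rw [this, Cardinal.mk_emptyCollection]
  have hk : contract g = 0 := by
    have : {α : Ω | (g ⁻¹' {α}).Infinite} = ∅ := by
      ext α
      simp only [Set.mem_setOf_eq, Set.mem_empty_iff_false, iff_false]
      intro hinf
      exact hinf (Set.Subsingleton.finite fun x hx y hy =>
        hg.1 ((Set.mem_singleton_iff.mp hx).trans (Set.mem_singleton_iff.mp hy).symm))
    show #({α : Ω | (g ⁻¹' {α}).Infinite} : Set Ω) = 0
    rw [this, Cardinal.mk_emptyCollection]
  exact ⟨⟨⟨⟨Or.inl hc, Or.inr hdg⟩, Or.inl (hc ▸ Cardinal.aleph0_pos)⟩,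
    Or.inr (hdg ▸ Cardinal.aleph0_pos)⟩, hk.trans_lt Cardinal.aleph0_pos⟩

theorem stmt3 (Ω : Type) [Countable Ω] [Infinite Ω] (u f : Function.End Ω)
    (hcu : 0 < collapse u) (hcu' : collapse u < ℵ₀)
    (hcf : 0 < collapse f) (hcf' : collapse f < ℵ₀)
    (hd : defect u = defect f) :
    f ∈ Subsemigroup.closure (S12345 ∪ {u}) := by
  classical
  obtain ⟨Tu, hTu, hTumk⟩ := exists_transversal_collapse u
  obtain ⟨Tf, hTf, hTfmk⟩ := exists_transversal_collapse f
  have hTuc_fin : (Tuᶜ : Set Ω).Finite :=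
    Cardinal.lt_aleph0_iff_set_finite.mp (hTumk ▸ hcu')
  have hTfc_fin : (Tfᶜ : Set Ω).Finite :=
    Cardinal.lt_aleph0_iff_set_finite.mp (hTfmk ▸ hcf')
  have hTu_inf : Tu.Infinite := by
    have := hTuc_fin.infinite_compl; rwa [compl_compl] at this
  have hrf_inf : (Set.range f).Infinite := by
    have hT_inf : Tf.Infinite := by
      have := hTfc_fin.infinite_compl; rwa [compl_compl] at this
    have := hT_inf.image hTf.1
    rwa [hTf.2] at this
  haveI : Infinite ↥Tu := hTu_inf.to_subtype
  haveI : Infinite ↥(Set.range f) := hrf_inf.to_subtype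
  obtain ⟨e⟩ : Nonempty (↥(Set.range f) ≃ ↥Tu) := nonempty_equiv_of_countable
  -- the collapsing map b
  set b : Function.End Ω := fun x => (e ⟨f x, Set.mem_range_self x⟩ : Ω) with hbdef
  have hbeq : ∀ x y, b x = b y ↔ f x = f y := by
    intro x y
    constructor
    · intro h
      have h2 := e.injective (Subtype.coe_injective h)
      exact congrArg Subtype.val h2
    · intro h
      simp only [hbdef, h]
  have hbTu : ∀ x, b x ∈ Tu := fun x => (e ⟨f x, Set.mem_range_self x⟩).2
  have hrb : Set.range b = Tu := by
    ext t; constructor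
    · rintro ⟨x, rfl⟩; exact hbTu x
    · intro ht
      obtain ⟨x, hx⟩ := (e.symm ⟨t, ht⟩).2
      refine ⟨x, ?_⟩
      have hx' : (⟨f x, Set.mem_range_self x⟩ : ↥(Set.range f)) = e.symm ⟨t, ht⟩ :=
        Subtype.ext hx
      show (e ⟨f x, Set.mem_range_self x⟩ : Ω) = t
      rw [hx', Equiv.apply_symm_apply]
  -- b is not injective
  have hf_ninj : ¬ Function.Injective f := fun hinj =>
    absurd (collapse_eq_zero_of_injective hinj) hcf.ne'
  have hb_ninj : ¬ Function.Injective b := by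
    intro hinj
    apply hf_ninj
    intro x y hxy
    exact hinj ((hbeq x y).mpr hxy)
  -- Tf is a transversal of b
  have hTfb : IsTransversal b Tf := by
    constructor
    · intro x hx y hy hxy
      exact hTf.1 hx hy ((hbeq x y).mp hxy)
    · ext t; constructor
      · rintro ⟨x, _, rfl⟩; exact ⟨x, rfl⟩
      · rintro ⟨z, rfl⟩
        have hz : f z ∈ f '' Tf := by rw [hTf.2]; exact Set.mem_range_self z
        obtain ⟨w, hw, hwz⟩ := hz
        exact ⟨w, hw, (hbeq w z).mpr hwz⟩
  -- b ∈ S12345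
  have hdb : defect b = collapse u := by rw [defect, hrb, hTumk]
  have hcb_pos : 0 < collapse b := collapse_pos_of_not_injective hb_ninj
  have hcb_lt : collapse b < ℵ₀ := lt_of_le_of_lt (collapse_le hTfb) (hTfmk ▸ hcf')
  have hkb : contract b = 0 := by
    have : {α : Ω | (b ⁻¹' {α}).Infinite} = ∅ := by
      ext α
      simp only [Set.mem_setOf_eq, Set.mem_empty_iff_false, iff_false]
      intro hinf
      obtain ⟨x, hx⟩ := hinf.nonempty
      refine hinf ((fibers_finite hcf' (f x)).subset ?_)
      intro y hy
      have : b y = b x := (Set.mem_singleton_iff.mp hy).trans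
        (Set.mem_singleton_iff.mp hx).symm
      exact Set.mem_singleton_iff.mpr ((hbeq y x).mp this)
    rw [contract, this, Cardinal.mk_emptyCollection]
  have hb_mem : b ∈ (S12345 : Set (Function.End Ω)) :=
    ⟨⟨⟨⟨Or.inr (hdb ▸ hcu), Or.inl hcb_pos⟩, Or.inl hcb_lt⟩,
      Or.inr (hdb ▸ hcu')⟩, hkb.trans_lt Cardinal.aleph0_pos⟩
  -- the bijection p
  have hd' : #(((Set.range u)ᶜ : Set Ω)) = #(((Set.range f)ᶜ : Set Ω)) := hd
  obtain ⟨e2⟩ : Nonempty (↥((Set.range u)ᶜ) ≃ ↥((Set.range f)ᶜ)) := Cardinal.eq.mp hd'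
  let eu : ↥Tu ≃ ↥(Set.range u) :=
    (Equiv.Set.imageOfInjOn u Tu hTu.1).trans (Equiv.setCongr hTu.2)
  let m1 : ↥(Set.range u) ≃ ↥(Set.range f) := eu.symm.trans e.symm
  let p : Ω ≃ Ω := (Equiv.Set.sumCompl (Set.range u)).symm.trans
    ((m1.sumCongr e2).trans (Equiv.Set.sumCompl (Set.range f)))
  have hp : ∀ x, p (u (b x)) = f x := by
    intro x
    have h1 : u (b x) ∈ Set.range u := Set.mem_range_self _
    have heu : eu ⟨b x, hbTu x⟩ = ⟨u (b x), h1⟩ := Subtype.ext rfl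
    have he : e ⟨f x, Set.mem_range_self x⟩ = ⟨b x, hbTu x⟩ := Subtype.ext rfl
    have hm1 : m1 ⟨u (b x), h1⟩ = ⟨f x, Set.mem_range_self x⟩ := by
      show e.symm (eu.symm ⟨u (b x), h1⟩) = _
      rw [← heu, Equiv.symm_apply_apply, ← he, Equiv.symm_apply_apply]
    show (Equiv.Set.sumCompl (Set.range f))
        ((m1.sumCongr e2) ((Equiv.Set.sumCompl (Set.range u)).symm (u (b x)))) = f x
    rw [Equiv.Set.sumCompl_symm_apply_of_mem h1]
    simp only [Equiv.sumCongr_apply, Sum.map_inl, hm1, Equiv.Set.sumCompl_apply_inl]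
  let pe : Function.End Ω := ⇑p
  have hp_mem : pe ∈ (S12345 : Set (Function.End Ω)) :=
    sym_mem_S12345 p.bijective
  -- conclusion
  have hfeq : f = pe * u * b := by
    funext x
    exact (hp x).symm
  rw [hfeq]
  exact Subsemigroup.mul_mem _
    (Subsemigroup.mul_mem _
      (Subsemigroup.subset_closure (Set.mem_union_left _ hp_mem))
      (Subsemigroup.subset_closure (Set.mem_union_right _ rfl)))
    (Subsemigroup.subset_closure (Set.mem_union_left _ hb_mem))
end

section
/- Let Ω be a countably infinite set and let u, v, f ∈ Ω^Ω. If c(u) = ∞, d(u) < ∞, c(f) = c(v) = 0, d(v) > 0, and 0 < d(f) < ∞, then f belongs to the subsemigroup of Ω^Ω generated by S_{1,2,3,4,5} ∪ {u, v}. -/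
/-!
Setting: `Ω` is a countably infinite set, `Function.End Ω = Ω → Ω` is the full
transformation semigroup (a subset is closed under composition in one order iff
it is closed in the other, so the lattice of subsemigroups is unaffected by the
left-to-right convention of the paper).
-/

open Cardinal

set_option maxHeartbeats 1000000

lemma exists_isTransversal {Ω : Type*} [Nonempty Ω] (f : Ω → Ω) :
    ∃ T : Set Ω, IsTransversal f T := by
  refine ⟨Function.invFun f '' Set.range f, ?_, ?_⟩
  · rintro x ⟨y, hy, rfl⟩ x' ⟨y', hy', rfl⟩ h
    rw [Function.invFun_eq hy, Function.invFun_eq hy'] at h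
    rw [h]
  · ext z
    constructor
    · rintro ⟨x, ⟨y, hy, rfl⟩, rfl⟩
      rw [Function.invFun_eq hy]; exact hy
    · intro hz
      exact ⟨_, ⟨z, hz, rfl⟩, Function.invFun_eq hz⟩

lemma collapse_le_of {Ω : Type*} {f : Ω → Ω} {T : Set Ω} (h : IsTransversal f T) :
    collapse f ≤ #(Tᶜ : Set Ω) :=
  ciInf_le (OrderBot.bddBelow _) (⟨T, h⟩ : {T : Set Ω // IsTransversal f T})

lemma collapse_eq_zero_iff {Ω : Type*} [Nonempty Ω] (f : Ω → Ω) :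
    collapse f = 0 ↔ Function.Injective f := by
  constructor
  · intro h
    obtain ⟨T, hT⟩ := exists_isTransversal f
    have hne : (Set.range (fun T : {T : Set Ω // IsTransversal f T} => #(T.1ᶜ : Set Ω))).Nonempty :=
      ⟨_, ⟨⟨T, hT⟩, rfl⟩⟩
    have hmem : collapse f ∈
        Set.range (fun T : {T : Set Ω // IsTransversal f T} => #(T.1ᶜ : Set Ω)) :=
      csInf_mem hne
    obtain ⟨⟨T', hT'⟩, hTeq⟩ := hmem
    rw [h] at hTeq
    have : T'ᶜ = (∅ : Set Ω) := by
      have := Cardinal.mk_eq_zero_iff.mp hTeq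
      exact Set.eq_empty_iff_forall_notMem.mpr fun x hx => this.false ⟨x, hx⟩
    have hTu : T' = Set.univ := Set.compl_empty_iff.mp this
    rw [hTu] at hT'
    exact Set.injOn_univ.mp hT'.1
  · intro h
    have ht : IsTransversal f Set.univ := ⟨Set.injOn_univ.mpr h, by simp⟩
    have := collapse_le_of ht
    simpa using this

lemma bij_mem_S12345 {Ω : Type*} [Nonempty Ω] {g : Function.End Ω} (hg : Function.Bijective g) :
    g ∈ (S12345 : Set (Function.End Ω)) := by
  have hc : collapse g = 0 := (collapse_eq_zero_iff g).mpr hg.1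
  have hd : defect g = 0 := by
    have : Set.range g = Set.univ := hg.2.range_eq
    simp [defect, this]
  have hk : contract g = 0 := by
    have h0 : {α : Ω | (g ⁻¹' {α}).Infinite} = ∅ := by
      ext α
      simp only [Set.mem_setOf_eq, Set.mem_empty_iff_false, iff_false]
      intro h
      refine h (Set.Finite.subset (Set.finite_singleton (Function.invFun g α)) ?_)
      intro x hx
      change g x = α at hx
      simp [Set.mem_singleton_iff, ← hx, Function.leftInverse_invFun hg.1 x]
    simp [contract, h0]
  refine ⟨⟨⟨⟨Or.inl hc, Or.inr hd⟩, Or.inl ?_⟩, Or.inr ?_⟩, ?_⟩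
  · rw [hc]; exact aleph0_pos
  · rw [hd]; exact aleph0_pos
  · show contract g < ℵ₀
    rw [hk]; exact aleph0_pos

lemma key {Ω : Type*} [Nonempty Ω] {g f : Ω → Ω}
    (hg : Function.Injective g) (hf : Function.Injective f)
    (hdg : 0 < defect g) (hdg' : defect g < ℵ₀)
    (hdf : 0 < defect f) (hdf' : defect f < ℵ₀) :
    ∃ w : Function.End Ω, w ∈ (S12345 : Set (Function.End Ω)) ∧ w ∘ g = f := by
  classical
  set x₀ := Classical.arbitrary Ω with hx₀
  set y₀ := f x₀ with hy₀
  obtain ⟨z₀, hz₀⟩ : ((Set.range g)ᶜ : Set Ω).Nonempty := by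
    rw [← Set.nonempty_coe_sort, ← Cardinal.mk_ne_zero_iff]
    exact ne_of_gt hdg
  set w : Function.End Ω := fun x => if h : x ∈ Set.range g then f (Function.invFun g x) else y₀
    with hw
  have hwg : ∀ t, w (g t) = f t := by
    intro t
    simp only [hw, dif_pos (Set.mem_range_self t), Function.leftInverse_invFun hg t]
  have hcomp : w ∘ g = f := funext fun t => hwg t
  have hrange : Set.range w = Set.range f := by
    apply Set.eq_of_subset_of_subset
    · rintro x ⟨a, rfl⟩
      by_cases h : a ∈ Set.range g
      · simp only [hw, dif_pos h]; exact Set.mem_range_self _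
      · simp only [hw, dif_neg h]; exact Set.mem_range_self _
    · rintro x ⟨a, rfl⟩
      exact ⟨g a, hwg a⟩
  have hdw : defect w = defect f := by simp only [defect, hrange]
  have htrans : IsTransversal w (Set.range g) := by
    constructor
    · rintro _ ⟨a, rfl⟩ _ ⟨b, rfl⟩ h
      rw [hwg, hwg] at h
      rw [hf h]
    · rw [← Set.range_comp, hcomp, hrange]
  have hcw_le : collapse w ≤ defect g := collapse_le_of htrans
  have hcw_pos : 0 < collapse w := by
    rw [pos_iff_ne_zero]
    intro h
    have hinj := (collapse_eq_zero_iff w).mp h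
    have h1 : w z₀ = y₀ := by simp only [hw, dif_neg hz₀]
    have h2 : w (g x₀) = y₀ := hwg x₀
    have := hinj (h1.trans h2.symm)
    exact hz₀ (this ▸ Set.mem_range_self x₀)
  have hk : contract w < ℵ₀ := by
    have hsub : {α : Ω | (w ⁻¹' {α}).Infinite} ⊆ {y₀} := by
      intro α hα
      by_contra hne
      apply hα
      apply Set.Subsingleton.finite
      intro x hx y hy
      change w x = α at hx; change w y = α at hy
      have hxr : x ∈ Set.range g := by
        by_contra h; apply hne; simp only [hw, dif_neg h] at hx
        simpa [Set.mem_singleton_iff] using hx.symm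
      have hyr : y ∈ Set.range g := by
        by_contra h; apply hne; simp only [hw, dif_neg h] at hy
        simpa [Set.mem_singleton_iff] using hy.symm
      obtain ⟨a, rfl⟩ := hxr
      obtain ⟨b, rfl⟩ := hyr
      rw [hwg] at hx; rw [hwg] at hy
      rw [hf (hx.trans hy.symm)]
    calc contract w ≤ #(({y₀} : Set Ω)) := Cardinal.mk_le_mk_of_subset hsub
      _ = 1 := Cardinal.mk_singleton _
      _ < ℵ₀ := Cardinal.one_lt_aleph0
  refine ⟨w, ⟨⟨⟨⟨Or.inr ?_, Or.inl hcw_pos⟩, Or.inl (lt_of_le_of_lt hcw_le hdg')⟩,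
    Or.inr ?_⟩, hk⟩, hcomp⟩
  · rw [hdw]; exact hdf
  · rw [hdw]; exact hdf'

lemma mk_eq_aleph0_of_infinite {Ω : Type*} [Countable Ω] {S : Set Ω} (h : S.Infinite) :
    #(S : Set Ω) = ℵ₀ := by
  haveI := h.to_subtype
  exact le_antisymm Cardinal.mk_le_aleph0 (Cardinal.aleph0_le_mk _)

lemma aleph0_le_mk_of_compl_lt {Ω : Type*} [Infinite Ω] {S : Set Ω}
    (h : #(Sᶜ : Set Ω) < ℵ₀) : ℵ₀ ≤ #(S : Set Ω) := by
  by_contra hlt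
  push_neg at hlt
  have hsum := Cardinal.mk_sum_compl S
  have : #Ω < ℵ₀ := by rw [← hsum]; exact Cardinal.add_lt_aleph0 hlt h
  exact absurd this (not_lt.mpr (Cardinal.aleph0_le_mk Ω))

theorem stmt8 (Ω : Type) [Countable Ω] [Infinite Ω] (u v f : Function.End Ω)
    (hcu : ℵ₀ ≤ collapse u) (hdu : defect u < ℵ₀)
    (hcf : collapse f = 0) (hcv : collapse v = 0) (hdv : 0 < defect v)
    (hdf : 0 < defect f) (hdf' : defect f < ℵ₀) :
    f ∈ Subsemigroup.closure (S12345 ∪ {u, v}) := by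
  classical
  have hf : Function.Injective f := (collapse_eq_zero_iff f).mp hcf
  have hv : Function.Injective v := (collapse_eq_zero_iff v).mp hcv
  have huX : (u : Function.End Ω) ∈ S12345 ∪ {u, v} := Or.inr (Set.mem_insert _ _)
  have hvX : (v : Function.End Ω) ∈ S12345 ∪ {u, v} :=
    Or.inr (Set.mem_insert_iff.mpr (Or.inr rfl))
  by_cases hdv' : defect v < ℵ₀
  · obtain ⟨w, hw, hcomp⟩ := key hv hf hdv hdv' hdf hdf'
    have heq : (w * v : Function.End Ω) = f := hcomp
    rw [← heq]
    exact Subsemigroup.mul_mem _ (Subsemigroup.subset_closure (Or.inl hw))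
      (Subsemigroup.subset_closure hvX)
  · push_neg at hdv'
    -- transversal of u
    obtain ⟨T, hT⟩ := exists_isTransversal u
    have hTc : ℵ₀ ≤ #(Tᶜ : Set Ω) := hcu.trans (collapse_le_of hT)
    have hTinf : ℵ₀ ≤ #(T : Set Ω) := by
      have h1 : #(u '' T : Set Ω) = #(T : Set Ω) := Cardinal.mk_image_eq_of_injOn u T hT.1
      have h2 : ℵ₀ ≤ #(Set.range u : Set Ω) := aleph0_le_mk_of_compl_lt hdu
      rw [hT.2] at h1
      rwa [← h1]
    obtain ⟨t₀, ht₀⟩ : T.Nonempty := by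
      rw [← Set.nonempty_coe_sort, ← Cardinal.mk_ne_zero_iff]
      intro h; rw [h, le_zero_iff] at hTinf; exact Cardinal.aleph0_ne_zero hTinf
    set A : Set Ω := Set.range v with hA
    set B : Set Ω := T \ {t₀} with hB
    have hAinf : A.Infinite := by
      rw [← Set.infinite_coe_iff, Cardinal.infinite_iff]
      rw [Cardinal.mk_range_eq v hv]
      exact Cardinal.aleph0_le_mk Ω
    have hAcinf : (Aᶜ : Set Ω).Infinite := by
      rw [← Set.infinite_coe_iff, Cardinal.infinite_iff]
      exact hdv'
    have hTinf' : T.Infinite := by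
      rw [← Set.infinite_coe_iff, Cardinal.infinite_iff]; exact hTinf
    have hBinf : B.Infinite := hTinf'.diff (Set.finite_singleton t₀)
    have hBcinf : (Bᶜ : Set Ω).Infinite := by
      apply Set.Infinite.mono _ (by
        rw [← Set.infinite_coe_iff, Cardinal.infinite_iff]; exact hTc)
      intro x hx
      simp only [hB, Set.mem_compl_iff, Set.mem_diff, not_and, not_not]
      intro hxT
      exact absurd hxT hx
    -- build the bijection p with p '' A = B
    have e₁ : Nonempty ((A : Set Ω) ≃ (B : Set Ω)) := by
      rw [← Cardinal.eq, mk_eq_aleph0_of_infinite hAinf, mk_eq_aleph0_of_infinite hBinf]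
    have e₂ : Nonempty ((Aᶜ : Set Ω) ≃ (Bᶜ : Set Ω)) := by
      rw [← Cardinal.eq, mk_eq_aleph0_of_infinite hAcinf, mk_eq_aleph0_of_infinite hBcinf]
    obtain ⟨e₁⟩ := e₁
    obtain ⟨e₂⟩ := e₂
    set p : Ω ≃ Ω :=
      (Equiv.Set.sumCompl A).symm.trans ((e₁.sumCongr e₂).trans (Equiv.Set.sumCompl B)) with hp
    have hpa : ∀ a (ha : a ∈ A), p a = (e₁ ⟨a, ha⟩ : Ω) := by
      intro a ha
      simp [hp, Equiv.Set.sumCompl_symm_apply_of_mem ha]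
    have himg : p '' A = B := by
      apply Set.eq_of_subset_of_subset
      · rintro x ⟨a, ha, rfl⟩
        rw [hpa a ha]
        exact (e₁ ⟨a, ha⟩).2
      · intro b hb
        refine ⟨(e₁.symm ⟨b, hb⟩ : Ω), (e₁.symm ⟨b, hb⟩).2, ?_⟩
        rw [hpa _ (e₁.symm ⟨b, hb⟩).2]
        simp
    -- the map g = u ∘ p ∘ v
    set g : Ω → Ω := fun x => u (p (v x)) with hg
    have hBsubT : B ⊆ T := Set.diff_subset
    have hginj : Function.Injective g := by
      intro x y hxy
      have h1 : p (v x) ∈ B := himg ▸ ⟨v x, Set.mem_range_self x, rfl⟩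
      have h2 : p (v y) ∈ B := himg ▸ ⟨v y, Set.mem_range_self y, rfl⟩
      have := hT.1 (hBsubT h1) (hBsubT h2) hxy
      exact hv (p.injective this)
    have hrg : Set.range g = (Set.range u) \ {u t₀} := by
      have h1 : Set.range g = u '' (p '' A) := by
        rw [hg]
        ext x
        simp only [Set.mem_range, Set.mem_image]
        constructor
        · rintro ⟨y, rfl⟩; exact ⟨p (v y), ⟨v y, Set.mem_range_self y, rfl⟩, rfl⟩
        · rintro ⟨z, ⟨a, ⟨y, rfl⟩, rfl⟩, rfl⟩; exact ⟨y, rfl⟩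
      rw [h1, himg]
      apply Set.eq_of_subset_of_subset
      · rintro x ⟨s, hs, rfl⟩
        refine ⟨⟨s, rfl⟩, ?_⟩
        simp only [Set.mem_singleton_iff]
        intro h
        exact hs.2 (hT.1 (hBsubT hs) ht₀ h)
      · rintro x ⟨hx, hxne⟩
        have hx' : x ∈ u '' T := hT.2 ▸ hx
        obtain ⟨s, hs, rfl⟩ := hx'
        refine ⟨s, ⟨hs, ?_⟩, rfl⟩
        simp only [Set.mem_singleton_iff]
        rintro rfl
        exact hxne rfl
    have hcompl : ((Set.range u) \ {u t₀})ᶜ = (Set.range u)ᶜ ∪ {u t₀} := by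
      ext x
      simp only [Set.mem_compl_iff, Set.mem_diff, Set.mem_union, Set.mem_singleton_iff,
        not_and, not_not]
      constructor
      · intro h
        by_cases hx : x ∈ Set.range u
        · exact Or.inr (h hx)
        · exact Or.inl hx
      · rintro (h | h)
        · exact fun hx => absurd hx h
        · exact fun _ => h
    have hdg : 0 < defect g := by
      rw [pos_iff_ne_zero]
      unfold defect
      rw [hrg, hcompl, Cardinal.mk_ne_zero_iff]
      exact ⟨⟨u t₀, Or.inr rfl⟩⟩
    have hdg' : defect g < ℵ₀ := by
      unfold defect
      rw [hrg, hcompl, Cardinal.lt_aleph0_iff_set_finite]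
      exact (Cardinal.lt_aleph0_iff_set_finite.mp hdu).union (Set.finite_singleton _)
    obtain ⟨w, hw, hcomp⟩ := key hginj hf hdg hdg' hdf hdf'
    set pe : Function.End Ω := (⇑p : Ω → Ω) with hpe
    have hpmem : pe ∈ (S12345 : Set (Function.End Ω)) := bij_mem_S12345 p.bijective
    have heq : w * u * pe * v = f := funext fun x => congrFun hcomp x
    rw [← heq]
    exact Subsemigroup.mul_mem _ (Subsemigroup.mul_mem _ (Subsemigroup.mul_mem _
      (Subsemigroup.subset_closure (Or.inl hw)) (Subsemigroup.subset_closure huX))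
      (Subsemigroup.subset_closure (Or.inl hpmem)))
      (Subsemigroup.subset_closure hvX)
end

section
/- Let Ω be a countably infinite set and let u, f ∈ Ω^Ω. If u is surjective, d(f) < ∞, k(f) < ∞, and c(u) = c(f) = ∞, then f belongs to the subsemigroup of Ω^Ω generated by S_{1,2,3,4,5} ∪ {u}. -/
/-!
Setting: `Ω` is a countably infinite set, `Function.End Ω = Ω → Ω` is the full
transformation semigroup (a subset is closed under composition in one order iff
it is closed in the other, so the lattice of subsemigroups is unaffected by the
left-to-right convention of the paper).
-/

open Cardinal

lemma exists_transversal_s9 {Ω : Type*} (f : Ω → Ω) :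
    Nonempty {T : Set Ω // IsTransversal f T} := by
  refine ⟨⟨Set.range (Set.rangeSplitting f), ?_, ?_⟩⟩
  · intro x hx y hy h
    obtain ⟨a, rfl⟩ := hx
    obtain ⟨b, rfl⟩ := hy
    rw [Set.apply_rangeSplitting f, Set.apply_rangeSplitting f] at h
    rw [Subtype.ext h]
  · rw [← Set.range_comp]
    have : f ∘ Set.rangeSplitting f = fun x : Set.range f => (x : Ω) :=
      funext fun x => Set.apply_rangeSplitting f x
    rw [this, Subtype.range_coe]

theorem stmt9 (Ω : Type) [Countable Ω] [Infinite Ω] (u f : Function.End Ω)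
    (hu : Function.Surjective u) (hdf : defect f < ℵ₀) (hkf : contract f < ℵ₀)
    (hcu : ℵ₀ ≤ collapse u) (hcf : ℵ₀ ≤ collapse f) :
    f ∈ Subsemigroup.closure (S12345 ∪ {u}) := by
  classical
  set s : Ω → Ω := Function.surjInv hu with hs
  have hus : ∀ b, u (s b) = b := fun b => Function.surjInv_eq hu b
  have hsinj : Function.Injective s := Function.injective_surjInv hu
  set g : Function.End Ω := fun x => s (f x) with hg
  -- every transversal of g is a transversal of f
  have htrans : ∀ T : Set Ω, IsTransversal g T → IsTransversal f T := by
    rintro T ⟨hinj, himg⟩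
    constructor
    · intro x hx y hy hxy
      exact hinj hx hy (by simp [hg, hxy])
    · have h1 : g '' T = s '' (f '' T) := Set.image_comp s f T
      have h2 : Set.range g = s '' Set.range f := Set.range_comp s f
      rw [h1, h2] at himg
      exact Set.image_injective.mpr hsinj himg
  have hcg : ℵ₀ ≤ collapse g := by
    have := exists_transversal_s9 g
    rw [collapse]
    refine le_ciInf fun T => hcf.trans ?_
    exact ciInf_le' (fun T' : {T' : Set Ω // IsTransversal f T'} => #(T'.1ᶜ : Set Ω))
      ⟨T.1, htrans T.1 T.2⟩
  -- range s is a transversal of u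
  have hrs : IsTransversal u (Set.range s) := by
    constructor
    · intro x hx y hy h
      obtain ⟨a, rfl⟩ := hx
      obtain ⟨b, rfl⟩ := hy
      rw [hus, hus] at h
      rw [h]
    · have : u '' Set.range s = Set.range (u ∘ s) := (Set.range_comp u s).symm
      rw [this]
      have h1 : u ∘ s = id := funext hus
      rw [h1, Set.range_id, Set.range_eq_univ.mpr hu]
  have hdg : ℵ₀ ≤ defect g := by
    have h1 : collapse u ≤ #((Set.range s)ᶜ : Set Ω) :=
      ciInf_le' (fun T' : {T' : Set Ω // IsTransversal u T'} => #(T'.1ᶜ : Set Ω))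
        ⟨Set.range s, hrs⟩
    have h2 : ((Set.range s)ᶜ : Set Ω) ⊆ (Set.range g)ᶜ := by
      apply Set.compl_subset_compl.mpr
      rintro x ⟨y, rfl⟩
      exact ⟨f y, rfl⟩
    exact hcu.trans (h1.trans (Cardinal.mk_le_mk_of_subset h2))
  have hkg : contract g < ℵ₀ := by
    have hsub : {α : Ω | (g ⁻¹' {α}).Infinite} ⊆ s '' {β : Ω | (f ⁻¹' {β}).Infinite} := by
      intro α hα
      obtain ⟨x, hx⟩ := hα.nonempty
      change s (f x) = α at hx
      refine ⟨f x, ?_, hx⟩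
      refine Set.Infinite.mono ?_ hα
      intro y hy
      change s (f y) = α at hy
      change f y = f x
      exact hsinj (hy.trans hx.symm)
    have hle : contract g ≤ contract f := by
      calc contract g ≤ #(s '' {β : Ω | (f ⁻¹' {β}).Infinite} : Set Ω) :=
            Cardinal.mk_le_mk_of_subset hsub
        _ ≤ contract f := Cardinal.mk_image_le
    exact lt_of_le_of_lt hle hkf
  have hgS : g ∈ (S12345 : Set (Function.End Ω)) := by
    refine ⟨⟨⟨⟨?_, ?_⟩, ?_⟩, ?_⟩, ?_⟩
    · exact Or.inr (Cardinal.aleph0_pos.trans_le hdg)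
    · exact Or.inl (Cardinal.aleph0_pos.trans_le hcg)
    · exact Or.inr hdg
    · exact Or.inl hcg
    · exact hkg
  have hf : f = u * g := by
    funext x
    show f x = u (s (f x))
    rw [hus]
  rw [hf]
  exact mul_mem (Subsemigroup.subset_closure (Or.inr rfl))
    (Subsemigroup.subset_closure (Or.inl hgS))
end
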